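/- arXiv:1109.4277 — 2 statements merged into one kernel-verified Lean document; each statement's English description precedes it below -/
import Mathlib

section
/- Let 𝒜 be a countable Boolean subalgebra of the powerset of ℕ and let ℱ ⊆ 𝒜 be a partial non-principal ultrafilter for 𝒜. Then for every countable Boolean subalgebra 𝒜̃ ⊇ 𝒜 there exists a partial non-principal ultrafilter ℱ̃ for 𝒜̃ with ℱ̃ ⊇ ℱ. -/
/-- A Boolean subalgebra of the powerset of ℕ. -/
def IsSubalgebra (A : Set (Set ℕ)) : Prop :=
  ∅ ∈ A ∧ Set.univ ∈ A ∧ (∀ X ∈ A, Xᶜ ∈ A) ∧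
  (∀ X ∈ A, ∀ Y ∈ A, X ∪ Y ∈ A) ∧ (∀ X ∈ A, ∀ Y ∈ A, X ∩ Y ∈ A)

/-- A partial non-principal ultrafilter for an algebra A. -/
def IsPartialUltrafilter (A F : Set (Set ℕ)) : Prop :=
  F ⊆ A ∧
  (∀ X ∈ A, X ∈ F ∨ Xᶜ ∈ F) ∧
  (∀ X ∈ A, ∀ Y ∈ A, X ∩ Y ∈ F → Y ∈ F) ∧
  (∀ X ∈ F, ∀ Y ∈ F, X ∩ Y ∈ A → X ∩ Y ∈ F) ∧
  (∀ X ∈ F, X.Infinite)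

theorem partial_ultrafilter_extension (A F Atil : Set (Set ℕ))
    (hAc : A.Countable) (hA : IsSubalgebra A) (hF : IsPartialUltrafilter A F)
    (hAtilc : Atil.Countable) (hAtil : IsSubalgebra Atil) (hsub : A ⊆ Atil) :
    ∃ Ftil : Set (Set ℕ), F ⊆ Ftil ∧ IsPartialUltrafilter Atil Ftil := by
  obtain ⟨hFA, hdich, hdown, hinter, hinf⟩ := hF
  obtain ⟨-, hunivA, hcompl, -, hcap⟩ := hA
  -- univ ∈ F
  have hunivF : Set.univ ∈ F := by
    rcases hdich _ hunivA with h | h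
    · exact h
    · exfalso
      have := hinf _ h
      simp at this
  -- finite intersections of members of F are in F
  have hsInter : ∀ t : Set (Set ℕ), t.Finite → t ⊆ F → ⋂₀ t ∈ F := by
    intro t ht
    refine Set.Finite.induction_on (motive := fun s _ => s ⊆ F → ⋂₀ s ∈ F) t ht ?_ ?_
    · intro _; simpa using hunivF
    · intro a s _ _ ih hsub'
      have haF : a ∈ F := hsub' (Set.mem_insert _ _)
      have hsF : ⋂₀ s ∈ F := ih fun x hx => hsub' (Set.mem_insert_of_mem _ hx)
      have : a ∩ ⋂₀ s ∈ A := hcap _ (hFA haF) _ (hFA hsF)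
      have := hinter _ haF _ hsF this
      simpa [Set.sInter_insert] using this
  -- the generating family: F together with all cofinite sets
  set G : Set (Set ℕ) := F ∪ {s | sᶜ.Finite} with hG
  have hNeBot : (Filter.generate G).NeBot := by
    rw [Filter.generate_neBot_iff]
    intro t htG htfin
    have hsplit : t = (t ∩ F) ∪ (t \ F) := by
      ext x; by_cases hx : x ∈ F <;> simp [hx]
    have h1 : ⋂₀ (t ∩ F) ∈ F := hsInter _ (htfin.subset Set.inter_subset_left)
      Set.inter_subset_right
    have h1inf : (⋂₀ (t ∩ F)).Infinite := hinf _ h1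
    have h2 : (⋂₀ (t \ F))ᶜ.Finite := by
      have : ∀ x ∈ t \ F, xᶜ.Finite := by
        intro x hx
        rcases htG hx.1 with h | h
        · exact absurd h hx.2
        · exact h
      rw [Set.compl_sInter]
      exact Set.Finite.sUnion ((htfin.diff (t := F)).image _) (by rintro y ⟨x, hx, rfl⟩; exact this x hx)
    have hne : (⋂₀ (t ∩ F) ∩ ⋂₀ (t \ F)).Nonempty := by
      have : (⋂₀ (t ∩ F) \ (⋂₀ (t \ F))ᶜ).Infinite := h1inf.diff h2
      refine (this.nonempty).mono ?_
      intro x hx; exact ⟨hx.1, not_not.mp hx.2⟩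
    rw [hsplit, Set.sInter_union]
    exact hne
  obtain ⟨U, hU⟩ := Ultrafilter.exists_le (Filter.generate G)
  have hGU : ∀ s ∈ G, s ∈ U := fun s hs => hU (Filter.mem_generate_of_mem hs)
  -- every member of U is infinite
  have hUinf : ∀ s ∈ U, s.Infinite := by
    intro s hs
    by_contra hfin
    rw [Set.not_infinite] at hfin
    have : sᶜ ∈ U := hGU _ (Or.inr (by simpa using hfin))
    have := U.toFilter.inter_mem hs this
    simp at this
  refine ⟨Atil ∩ {s | s ∈ U}, ?_, ?_, ?_, ?_, ?_, ?_⟩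
  · intro X hX
    exact ⟨hsub (hFA hX), hGU _ (Or.inl hX)⟩
  · exact Set.inter_subset_left
  · intro X hX
    rcases U.mem_or_compl_mem X with h | h
    · exact Or.inl ⟨hX, h⟩
    · exact Or.inr ⟨hAtil.2.2.1 _ hX, h⟩
  · rintro X hX Y hY ⟨-, hXY⟩
    exact ⟨hY, U.toFilter.mem_of_superset hXY Set.inter_subset_right⟩
  · rintro X ⟨-, hXU⟩ Y ⟨-, hYU⟩ hXYA
    exact ⟨hXYA, U.toFilter.inter_mem hXU hYU⟩
  · rintro X ⟨-, hXU⟩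
    exact hUinf _ hXU
end

section
/- Let ℱ be a partial non-principal ultrafilter for a Boolean subalgebra 𝒜 of subsets of ℕ, and let (Ã_i)_{i∈ℕ} be a sequence of subsets of ℕ. Define, for a finite binary string x ∈ 2^{<ℕ}, the set Ã^x := ⋂_{i < |x|} B_i where B_i = Ã_i if x_i = 0 and B_i = ℕ∖Ã_i if x_i = 1. Consider the tree T of binary strings x such that Ã^x ∩ F is infinite for every F ∈ ℱ. Then T is an infinite tree. -/
/-- The set Atil^x for a finite binary string x. -/
def AtX (Atil : ℕ → Set ℕ) (x : List Bool) : Set ℕ :=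
  ⋂ i ∈ Finset.range x.length, if x.getD i false = false then Atil i else (Atil i)ᶜ

lemma atx_nil (Atil : ℕ → Set ℕ) : AtX Atil [] = Set.univ := by
  simp [AtX]

lemma atx_append (Atil : ℕ → Set ℕ) (x : List Bool) (b : Bool) :
    AtX Atil (x ++ [b]) =
    AtX Atil x ∩ (if b = false then Atil x.length else (Atil x.length)ᶜ) := by
  unfold AtX
  have hl : (x ++ [b]).length = x.length + 1 := by simp
  rw [hl, Finset.range_add_one, Finset.set_biInter_insert, Set.inter_comm]
  congr 1
  · apply Set.iInter₂_congr
    intro i hi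
    rw [List.getD_append _ _ _ _ (Finset.mem_range.mp hi)]
  · have hb : (x ++ [b]).getD x.length false = b := by
      simp [List.getD_eq_getElem?_getD, List.getElem?_append_right]
    rw [hb]

theorem tree_is_infinite (A F : Set (Set ℕ)) (hA : IsSubalgebra A)
    (hF : IsPartialUltrafilter A F) (Atil : ℕ → Set ℕ) :
    ∀ n : ℕ, ∃ x : List Bool, x.length = n ∧
      ∀ G ∈ F, (AtX Atil x ∩ G).Infinite := by
  obtain ⟨hFA, _, _, hInterF, hInf⟩ := hF
  intro n
  induction n with
  | zero =>
    exact ⟨[], rfl, fun G hG => by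
      rw [atx_nil, Set.univ_inter]; exact hInf G hG⟩
  | succ n ih =>
    obtain ⟨x, hlen, hx⟩ := ih
    by_contra h
    push_neg at h
    obtain ⟨G₀, hG₀F, hG₀⟩ := h (x ++ [false]) (by simp [hlen])
    obtain ⟨G₁, hG₁F, hG₁⟩ := h (x ++ [true]) (by simp [hlen])
    have hGF : G₀ ∩ G₁ ∈ F :=
      hInterF G₀ hG₀F G₁ hG₁F (hA.2.2.2.2 G₀ (hFA hG₀F) G₁ (hFA hG₁F))
    have hsub : AtX Atil x ∩ (G₀ ∩ G₁) ⊆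
        (AtX Atil (x ++ [false]) ∩ G₀) ∪ (AtX Atil (x ++ [true]) ∩ G₁) := by
      rw [atx_append, atx_append]
      intro a ⟨ha, haG₀, haG₁⟩
      by_cases hm : a ∈ Atil x.length
      · exact Or.inl ⟨⟨ha, by simp [hm]⟩, haG₀⟩
      · exact Or.inr ⟨⟨ha, by simp [hm]⟩, haG₁⟩
    exact hx (G₀ ∩ G₁) hGF ((hG₀.union hG₁).subset hsub)
end
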